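/- The 1-Lipschitz saturation M_{S_1} := {h ∈ O_{X,x}^p : h_D ∈ integral closure of M_D} is an O_{X,x}-submodule of O_{X,x}^p. -/
import Mathlib


/-- The double of `h ∈ R^p` along the two "pullback" homomorphisms `φ1, φ2 : R →+* S`. -/
def Lip.double {R S : Type*} [CommRing R] [CommRing S] {p : ℕ}
    (φ1 φ2 : R →+* S) (h : Fin p → R) : Fin p ⊕ Fin p → S :=
  Sum.elim (fun i => φ1 (h i)) (fun i => φ2 (h i))

/-- The integral closure of a submodule `N ⊆ A^ι` by the curve criterion: `h` is in the
closure iff for every analytic curve (modeled as a homomorphism `φ : A →+* ℂ⟦t⟧`), the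
pullback `φ*h` lies in the module generated by the pullback of `N`. -/
def Lip.curveCl {A : Type*} [CommRing A] {ι : Type*} (N : Submodule A (ι → A)) :
    Set (ι → A) :=
  {h | ∀ φ : A →+* PowerSeries ℂ,
    (fun i => φ (h i)) ∈
      Submodule.span (PowerSeries ℂ) ((fun m : ι → A => fun i => φ (m i)) '' (N : Set (ι → A)))}

/-- Auxiliary linear map: `f ↦ (0, a · f∘inr)`. -/
def Lip.T {C : Type*} [CommRing C] {p : ℕ} (a : C) :
    (Fin p ⊕ Fin p → C) →ₗ[C] (Fin p ⊕ Fin p → C) where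
  toFun f := Sum.elim (fun _ => 0) (fun j => a * f (Sum.inr j))
  map_add' f g := by funext j; cases j <;> simp [mul_add]
  map_smul' s f := by
    funext j; cases j <;> simp [Pi.smul_apply, smul_eq_mul] <;> ring

/-- The 1-Lipschitz saturation `M_{S₁} = {h : h_D ∈ closure (M_D)}` is a submodule:
it is closed under the operations `(α, h, h') ↦ α h + h'`. Here `M_D` is the double of
`M`, and we assume (as holds for `O_X`, `X ⊆ ℂⁿ`) that `φ1 α − φ2 α` lies in the ideal
generated by the `φ1 (z i) − φ2 (z i)` for the coordinates `z`. -/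
theorem lipschitzSaturationOne_submodule {R S : Type*} [CommRing R] [CommRing S] {p n : ℕ}
    (φ1 φ2 : R →+* S) (z : Fin n → R)
    (hz : ∀ α : R, φ1 α - φ2 α ∈ Ideal.span (Set.range fun i => φ1 (z i) - φ2 (z i)))
    (M : Submodule R (Fin p → R)) (α : R) (h h' : Fin p → R)
    (hh : Lip.double φ1 φ2 h ∈ Lip.curveCl (Submodule.span S (Lip.double φ1 φ2 '' M)))
    (hh' : Lip.double φ1 φ2 h' ∈ Lip.curveCl (Submodule.span S (Lip.double φ1 φ2 '' M))) :
    Lip.double φ1 φ2 (α • h + h') ∈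
      Lip.curveCl (Submodule.span S (Lip.double φ1 φ2 '' M)) := by
  intro φ
  obtain ⟨c, hc⟩ := (Submodule.mem_span_range_iff_exists_fun S).mp (hz α)
  set MD : Submodule S (Fin p ⊕ Fin p → S) := Submodule.span S (Lip.double φ1 φ2 '' M) with hMD
  set P : (Fin p ⊕ Fin p → S) → (Fin p ⊕ Fin p → PowerSeries ℂ) :=
    fun f => fun j => φ (f j) with hPdef
  set N : Submodule (PowerSeries ℂ) (Fin p ⊕ Fin p → PowerSeries ℂ) :=
    Submodule.span (PowerSeries ℂ) (P '' (MD : Set _)) with hNdef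
  -- the key stability: for each coordinate i, T (φ(φ2(z i)) - φ(φ1(z i))) maps N to N
  have hTgen : ∀ (i : Fin n) (w : Fin p ⊕ Fin p → S), w ∈ MD →
      Lip.T (φ (φ2 (z i)) - φ (φ1 (z i))) (P w) ∈ N := by
    intro i w hw
    induction hw using Submodule.span_induction with
    | mem w hw =>
      obtain ⟨m, hm, rfl⟩ := hw
      have key : Lip.T (φ (φ2 (z i)) - φ (φ1 (z i))) (P (Lip.double φ1 φ2 m)) =
          P (Lip.double φ1 φ2 (z i • m)) - φ (φ1 (z i)) • P (Lip.double φ1 φ2 m) := by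
        funext j
        cases j with
        | inl j => simp [Lip.T, Lip.double, Pi.smul_apply, smul_eq_mul, P]
        | inr j =>
          simp [Lip.T, Lip.double, Pi.smul_apply, smul_eq_mul, P]
          ring
      rw [key]
      have h1 : P (Lip.double φ1 φ2 (z i • m)) ∈ N :=
        Submodule.subset_span ⟨Lip.double φ1 φ2 (z i • m),
          Submodule.subset_span ⟨z i • m, M.smul_mem _ hm, rfl⟩, rfl⟩
      have h2 : P (Lip.double φ1 φ2 m) ∈ N :=
        Submodule.subset_span ⟨Lip.double φ1 φ2 m, Submodule.subset_span ⟨m, hm, rfl⟩, rfl⟩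
      exact N.sub_mem h1 (N.smul_mem _ h2)
    | zero =>
      have : P (0 : Fin p ⊕ Fin p → S) = 0 := by funext j; simp [P]
      rw [this, map_zero]; exact N.zero_mem
    | add x y hx hy ihx ihy =>
      have : P (x + y) = P x + P y := by funext j; simp [P]
      rw [this, map_add]; exact N.add_mem ihx ihy
    | smul s x hx ihx =>
      have : P (s • x) = φ s • P x := by
        funext j; simp [P, Pi.smul_apply, smul_eq_mul]
      rw [this, map_smul]; exact N.smul_mem _ ihx
  have hT : ∀ (i : Fin n) (f : Fin p ⊕ Fin p → PowerSeries ℂ), f ∈ N →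
      Lip.T (φ (φ2 (z i)) - φ (φ1 (z i))) f ∈ N := by
    intro i f hf
    induction hf using Submodule.span_induction with
    | mem w hw => obtain ⟨w, hw, rfl⟩ := hw; exact hTgen i w hw
    | zero => rw [map_zero]; exact N.zero_mem
    | add x y hx hy ihx ihy => rw [map_add]; exact N.add_mem ihx ihy
    | smul s x hx ihx => rw [map_smul]; exact N.smul_mem _ ihx
  have hhN : P (Lip.double φ1 φ2 h) ∈ N := hh φ
  have hh'N : P (Lip.double φ1 φ2 h') ∈ N := hh' φ
  -- the sum identity from hz
  have hsum : ∑ i, φ (c i) * (φ (φ1 (z i)) - φ (φ2 (z i))) = φ (φ1 α) - φ (φ2 α) := by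
    have := congrArg φ hc
    rw [map_sum, map_sub] at this
    simpa [smul_eq_mul, map_mul, map_sub] using this
  -- decomposition
  have decomp : P (Lip.double φ1 φ2 (α • h + h')) =
      φ (φ1 α) • P (Lip.double φ1 φ2 h) + P (Lip.double φ1 φ2 h') +
        ∑ i, φ (c i) • Lip.T (φ (φ2 (z i)) - φ (φ1 (z i))) (P (Lip.double φ1 φ2 h)) := by
    funext j
    have hev : (∑ i, φ (c i) • Lip.T (φ (φ2 (z i)) - φ (φ1 (z i)))
        (P (Lip.double φ1 φ2 h))) j
        = ∑ i, φ (c i) • (Lip.T (φ (φ2 (z i)) - φ (φ1 (z i)))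
        (P (Lip.double φ1 φ2 h))) j := by
      simp [Finset.sum_apply]
    rw [Pi.add_apply, Pi.add_apply, hev]
    cases j with
    | inl j =>
      simp [Lip.T, Lip.double, P, Pi.smul_apply, smul_eq_mul, map_add, map_mul]
    | inr j =>
      simp only [Lip.T, Lip.double, P, Pi.smul_apply, smul_eq_mul, Sum.elim_inr,
        LinearMap.coe_mk, AddHom.coe_mk, Pi.add_apply]
      have hsum2 : ∑ i, φ (c i) * ((φ (φ2 (z i)) - φ (φ1 (z i))) * φ (φ2 (h j)))
          = (φ (φ2 α) - φ (φ1 α)) * φ (φ2 (h j)) := by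
        calc ∑ i, φ (c i) * ((φ (φ2 (z i)) - φ (φ1 (z i))) * φ (φ2 (h j)))
            = ∑ i, -(φ (c i) * (φ (φ1 (z i)) - φ (φ2 (z i)))) * φ (φ2 (h j)) :=
              Finset.sum_congr rfl fun i _ => by ring
          _ = (φ (φ2 α) - φ (φ1 α)) * φ (φ2 (h j)) := by
              rw [← Finset.sum_mul, Finset.sum_neg_distrib, hsum]; ring
      rw [hsum2]
      simp only [map_add, map_mul]
      ring
  show P (Lip.double φ1 φ2 (α • h + h')) ∈ N
  rw [decomp]
  refine N.add_mem (N.add_mem (N.smul_mem _ hhN) hh'N) (Submodule.sum_mem _ ?_)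
  intro i _
  exact N.smul_mem _ (hT i _ hhN)
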